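/- Let k be a field and let f ∈ k[x₀,x₁,x₂,x₃] be a homogeneous polynomial of degree 3 defining a smooth cubic surface X = {f = 0} ⊂ ℙ³_k, and assume the dehomogenization g := f(1,x₁,x₂,x₃) is irreducible, with function field F := Frac(k[x₁,x₂,x₃]/(g)). Then the degree of irrationality of F over k belongs to {1, 2, 3}. -/

import Mathlib

open MvPolynomial

/-- The rational function field `k(t₁,t₂)`: the fraction field of the polynomial
ring in two variables over `k`. -/
noncomputable abbrev RatFunc2 (k : Type*) [Field k] : Type _ :=
  FractionRing (MvPolynomial (Fin 2) k)

/-- The degree of irrationality of a field extension `F/k`: the minimum of the degrees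
`[F : E]` over all intermediate fields `k ⊆ E ⊆ F` such that `F/E` is finite and `E` is
`k`-isomorphic to the rational function field `k(t₁,t₂)`. -/
noncomputable def degreeOfIrrationality (k F : Type*) [Field k] [Field F] [Algebra k F] : ℕ :=
  sInf {n : ℕ | ∃ E : IntermediateField k F,
    Nonempty (↥E ≃ₐ[k] RatFunc2 k) ∧
    FiniteDimensional ↥E F ∧ Module.finrank (↥E) F = n}


lemma totalDegree_aeval_le' {k : Type*} [CommRing k] {n m : ℕ}
    (p : MvPolynomial (Fin n) k) (s : Fin n → MvPolynomial (Fin m) k)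
    (hs : ∀ j, (s j).totalDegree ≤ 1) :
    (aeval s p).totalDegree ≤ p.totalDegree := by
  conv_lhs => rw [← support_sum_monomial_coeff p]
  rw [map_sum]
  refine (totalDegree_finset_sum _ _).trans (Finset.sup_le fun d hd => ?_)
  rw [aeval_monomial]
  refine (totalDegree_mul _ _).trans ?_
  have h1 : (algebraMap k (MvPolynomial (Fin m) k) (coeff d p)).totalDegree = 0 :=
    totalDegree_C _
  rw [h1, zero_add]
  refine le_trans ?_ (le_totalDegree hd)
  rw [Finsupp.prod]
  refine (totalDegree_finset_prod _ _).trans ?_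
  calc ∑ j ∈ d.support, ((s j) ^ (d j)).totalDegree
      ≤ ∑ j ∈ d.support, d j * (s j).totalDegree :=
        Finset.sum_le_sum fun j _ => totalDegree_pow _ _
    _ ≤ ∑ j ∈ d.support, d j * 1 :=
        Finset.sum_le_sum fun j _ => Nat.mul_le_mul_left _ (hs j)
    _ = ∑ j ∈ d.support, d j := by simp
    _ = d.sum fun _ e => e := rfl

lemma exists_degreeOf_pos {k : Type*} [Field k] {n : ℕ} {g : MvPolynomial (Fin n) k}
    (hirr : Irreducible g) : ∃ i, 1 ≤ g.degreeOf i := by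
  by_contra h
  push_neg at h
  have htot : g.totalDegree = 0 := by
    rw [totalDegree_eq_zero_iff]
    intro m hm x
    have := le_trans (monomial_le_degreeOf x hm) (Nat.lt_one_iff.mp (h x)).le
    simpa using this
  have hgC : g = C (coeff 0 g) := by
    ext m
    rcases eq_or_ne m 0 with rfl | hm
    · simp
    · rw [coeff_C, if_neg (Ne.symm hm)]
      by_contra hc
      have hms : m ∈ g.support := by rwa [mem_support_iff]
      exact hm (Finsupp.ext fun x => (totalDegree_eq_zero_iff _ g).mp htot m hms x)
  have hc0 : coeff 0 g ≠ 0 := by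
    intro h0
    rw [h0, map_zero] at hgC
    exact hirr.ne_zero hgC
  exact hirr.not_isUnit (hgC ▸ (IsUnit.of_mul_eq_one (a := C (coeff 0 g)) (C (coeff 0 g)⁻¹)
    (by rw [← map_mul, mul_inv_cancel₀ hc0, map_one])))

lemma finSuccEquiv_rename_succ {k : Type*} [CommRing k] {n : ℕ} (p : MvPolynomial (Fin n) k) :
    finSuccEquiv k n (rename Fin.succ p) = Polynomial.C p := by
  have : ((finSuccEquiv k n).toAlgHom.comp (rename (Fin.succ : Fin n → Fin (n+1)))) =
      (Polynomial.CAlgHom : MvPolynomial (Fin n) k →ₐ[k] Polynomial (MvPolynomial (Fin n) k)) := by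
    apply MvPolynomial.algHom_ext
    intro j
    simp [finSuccEquiv_X_succ, Polynomial.CAlgHom]
  exact congrFun (congrArg (fun f => f.toFun) this) p

lemma aeval_finSuccEquiv' {k F : Type*} [CommRing k] [CommRing F] [Algebra k F] {n : ℕ}
    (c : Fin (n+1) → F) (p : MvPolynomial (Fin (n+1)) k) :
    aeval c p = Polynomial.eval₂
      ((aeval (fun j : Fin n => c j.succ) : MvPolynomial (Fin n) k →ₐ[k] F) :
        MvPolynomial (Fin n) k →+* F)
      (c 0) (finSuccEquiv k n p) := by
  have : (aeval c : MvPolynomial (Fin (n+1)) k →ₐ[k] F).toRingHom =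
      (Polynomial.eval₂RingHom
        ((aeval (fun j : Fin n => c j.succ) : MvPolynomial (Fin n) k →ₐ[k] F) :
          MvPolynomial (Fin n) k →+* F) (c 0)).comp
        ((finSuccEquiv k n :
            MvPolynomial (Fin (n+1)) k ≃ₐ[k] Polynomial (MvPolynomial (Fin n) k)) :
          MvPolynomial (Fin (n+1)) k →+* Polynomial (MvPolynomial (Fin n) k)) := by
    apply MvPolynomial.ringHom_ext
    · intro a
      simp [finSuccEquiv_apply]
    · intro j
      refine Fin.cases ?_ ?_ j
      · simp [finSuccEquiv_X_zero]
      · intro j'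
        simp [finSuccEquiv_X_succ]
  exact congrFun (congrArg (fun f => f.toFun) this) p


set_option maxHeartbeats 1000000 in
/-- The degree of irrationality of a smooth cubic surface in `ℙ³` over a field `k`
is `1`, `2`, or `3`. -/
theorem degreeOfIrrationality_cubic_mem
    (k : Type) [Field k]
    (f : MvPolynomial (Fin 4) k) (hdeg : f.IsHomogeneous 3)
    (hsmooth : ∀ v : Fin 4 → AlgebraicClosure k, v ≠ 0 →
      ¬ (eval v (MvPolynomial.map (algebraMap k (AlgebraicClosure k)) f) = 0 ∧
         ∀ i : Fin 4,
           eval v (MvPolynomial.map (algebraMap k (AlgebraicClosure k)) (pderiv i f)) = 0))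
    (g : MvPolynomial (Fin 3) k) (hg : g = aeval (Fin.cons 1 X) f)
    (hirr : Irreducible g)
    (F : Type) [Field F] [Algebra k F]
    [Algebra (MvPolynomial (Fin 3) k ⧸ Ideal.span {g}) F]
    [IsScalarTower k (MvPolynomial (Fin 3) k ⧸ Ideal.span {g}) F]
    [IsFractionRing (MvPolynomial (Fin 3) k ⧸ Ideal.span {g}) F] :
    degreeOfIrrationality k F ∈ ({1, 2, 3} : Set ℕ) := by
  classical
  -- setup
  haveI hprime : (Ideal.span {g}).IsPrime :=
    (Ideal.span_singleton_prime hirr.ne_zero).mpr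
      (UniqueFactorizationMonoid.irreducible_iff_prime.mp hirr)
  obtain ⟨i, hi⟩ := exists_degreeOf_pos hirr
  set τ : Equiv.Perm (Fin 3) := Equiv.swap 0 i with hτdef
  set g' : MvPolynomial (Fin 3) k := rename τ g with hg'def
  have hg'irr : Irreducible g' :=
    (MulEquiv.irreducible_iff (renameEquiv k τ)).mpr hirr
  set q : Polynomial (MvPolynomial (Fin 2) k) := finSuccEquiv k 2 g' with hqdef
  have hd0 : degreeOf 0 g' = degreeOf i g := by
    have := degreeOf_rename_of_injective (p := g) (f := ⇑τ) τ.injective i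
    rwa [Equiv.swap_apply_right] at this
  have hqnat : q.natDegree = degreeOf i g := by
    rw [hqdef, natDegree_finSuccEquiv, hd0]
  have hq1 : 1 ≤ q.natDegree := hqnat ▸ hi
  have htotg : g.totalDegree ≤ 3 := by
    rw [hg]
    refine le_trans (totalDegree_aeval_le' f _ ?_) hdeg.totalDegree_le
    intro j
    refine Fin.cases ?_ ?_ j
    · simp
    · intro j'
      simp [totalDegree_X]
  have hq3 : q.natDegree ≤ 3 := by
    rw [hqnat]
    exact le_trans (degreeOf_le_totalDegree g i) htotg
  have hq0 : q ≠ 0 := by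
    rw [hqdef, ne_eq, EmbeddingLike.map_eq_zero_iff]
    exact hg'irr.ne_zero
  -- the projection hom
  set π : MvPolynomial (Fin 3) k →ₐ[k] F :=
    (IsScalarTower.toAlgHom k (MvPolynomial (Fin 3) k ⧸ Ideal.span {g}) F).comp
      (Ideal.Quotient.mkₐ k (Ideal.span {g})) with hπdef
  have hπ0 : ∀ p : MvPolynomial (Fin 3) k, π p = 0 ↔ p ∈ Ideal.span {g} := by
    intro p
    constructor
    · intro h
      have h2 : algebraMap (MvPolynomial (Fin 3) k ⧸ Ideal.span {g}) F
          (Ideal.Quotient.mk (Ideal.span {g}) p) =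
          algebraMap (MvPolynomial (Fin 3) k ⧸ Ideal.span {g}) F 0 := by
        rw [map_zero]; exact h
      have := IsFractionRing.injective (MvPolynomial (Fin 3) k ⧸ Ideal.span {g}) F h2
      rwa [Ideal.Quotient.eq_zero_iff_mem] at this
    · intro h
      show algebraMap (MvPolynomial (Fin 3) k ⧸ Ideal.span {g}) F
        (Ideal.Quotient.mk (Ideal.span {g}) p) = 0
      rw [Ideal.Quotient.eq_zero_iff_mem.mpr h, map_zero]
  set a : Fin 3 → F := ⇑π ∘ X with hadef
  have hπa : ∀ p : MvPolynomial (Fin 3) k, π p = aeval a p := by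
    intro p
    conv_lhs => rw [MvPolynomial.aeval_unique π]
  set u : Fin 2 → Fin 3 := fun j => τ j.succ with hudef
  set ψ : MvPolynomial (Fin 2) k →ₐ[k] F := aeval (fun j : Fin 2 => a (u j)) with hψdef
  have hψπ : ∀ p : MvPolynomial (Fin 2) k, ψ p = π (rename u p) := by
    intro p
    rw [hπa, aeval_rename]
    rfl
  -- the key vanishing
  have heval : Polynomial.eval₂ (ψ :  MvPolynomial (Fin 2) k →+* F) (a i) q = 0 := by
    have h1 := aeval_finSuccEquiv' (a ∘ τ) g'
    have h2 : aeval (a ∘ ⇑τ) g' = aeval a g := by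
      rw [hg'def, aeval_rename]
      have hca : ((a ∘ ⇑τ) ∘ ⇑τ) = a := by
        funext x
        simp [Function.comp, hτdef, Equiv.swap_apply_self]
      rw [hca]
    have h3 : aeval a g = 0 := by
      rw [← hπa]
      exact (hπ0 g).mpr (Ideal.subset_span rfl)
    have h4 : (a ∘ ⇑τ) 0 = a i := by
      simp [Function.comp, hτdef, Equiv.swap_apply_left]
    rw [h2, h3, h4] at h1
    have h5 : (fun j : Fin 2 => (a ∘ ⇑τ) j.succ) = fun j : Fin 2 => a (u j) := rfl
    rw [h5] at h1
    exact h1.symm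
  -- injectivity of ψ
  have hψinj : Function.Injective ψ := by
    rw [injective_iff_map_eq_zero]
    intro p hp
    by_contra hp0
    obtain ⟨h, hh⟩ := Ideal.mem_span_singleton'.mp ((hπ0 _).mp ((hψπ p) ▸ hp))
    have h2 : rename (⇑τ) (rename u p) = rename (⇑τ) (h * g) := by rw [hh]
    rw [rename_rename, map_mul] at h2
    have hcomp : (⇑τ ∘ u) = (Fin.succ : Fin 2 → Fin 3) := by
      funext x
      simp [hudef, hτdef, Equiv.swap_apply_self]
    rw [hcomp] at h2
    have h3 := congrArg (⇑(finSuccEquiv k 2)) h2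
    rw [finSuccEquiv_rename_succ, map_mul] at h3
    have hw0 : finSuccEquiv k 2 (rename (⇑τ) h) ≠ 0 := by
      intro hz
      rw [hz, zero_mul, Polynomial.C_eq_zero] at h3
      exact hp0 h3
    have h4 := congrArg Polynomial.natDegree h3
    rw [Polynomial.natDegree_C, Polynomial.natDegree_mul hw0 hq0] at h4
    omega
  -- the intermediate field
  set Λ : RatFunc2 k →ₐ[k] F := IsFractionRing.liftAlgHom hψinj with hΛdef
  have hΛψ : ∀ p : MvPolynomial (Fin 2) k,
      Λ (algebraMap (MvPolynomial (Fin 2) k) (RatFunc2 k) p) = ψ p := by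
    intro p
    rw [hΛdef, IsFractionRing.liftAlgHom_apply, IsFractionRing.lift_algebraMap]
    rfl
  set E : IntermediateField k F := Λ.fieldRange with hEdef
  have hEiso : Nonempty (↥E ≃ₐ[k] RatFunc2 k) :=
    ⟨(show RatFunc2 k ≃ₐ[k] ↥E from AlgEquiv.ofInjectiveField Λ).symm⟩
  have hψmem : ∀ p : MvPolynomial (Fin 2) k, ψ p ∈ E := by
    intro p
    exact ⟨algebraMap (MvPolynomial (Fin 2) k) (RatFunc2 k) p, hΛψ p⟩
  set ψE : MvPolynomial (Fin 2) k →ₐ[k] ↥E :=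
    ψ.codRestrict E.toSubalgebra hψmem with hψEdef
  have hψEval : ∀ p, (algebraMap ↥E F) (ψE p) = ψ p := fun p => rfl
  have hψEinj : Function.Injective ψE := by
    intro x y hxy
    apply hψinj
    rw [← hψEval, ← hψEval, hxy]
  -- the element a i is algebraic over E
  set α : F := a i with hαdef
  set qE : Polynomial ↥E := q.map (ψE : MvPolynomial (Fin 2) k →+* ↥E) with hqEdef
  have hqE0 : qE ≠ 0 := by
    intro hz
    apply hq0
    apply Polynomial.map_injective (ψE : MvPolynomial (Fin 2) k →+* ↥E)
      (fun x y hxy => hψEinj hxy)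
    rw [← hqEdef, hz, Polynomial.map_zero]
  have haeval0 : Polynomial.aeval α qE = 0 := by
    rw [hqEdef, Polynomial.aeval_def, Polynomial.eval₂_map]
    have : (algebraMap ↥E F).comp (ψE : MvPolynomial (Fin 2) k →+* ↥E) =
        (ψ : MvPolynomial (Fin 2) k →+* F) := RingHom.ext fun p => hψEval p
    rw [this]
    exact heval
  have hint : IsIntegral ↥E α := (IsAlgebraic.isIntegral ⟨qE, hqE0, haeval0⟩)
  -- adjoin α generates everything
  set S : IntermediateField ↥E F := IntermediateField.adjoin ↥E {α} with hSdef
  have hSgen : ∀ j : Fin 3, a j ∈ S := by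
    intro j
    have hj : τ (τ j) = j := by rw [hτdef]; exact Equiv.swap_apply_self _ _ _
    rw [← hj]
    refine Fin.cases ?_ ?_ (τ j)
    · have hτ0 : τ 0 = i := by rw [hτdef]; exact Equiv.swap_apply_left 0 i
      rw [hτ0]
      exact IntermediateField.subset_adjoin _ _ rfl
    · intro j'
      have : a (τ j'.succ) = ψ (X j') := by rw [hψdef]; simp [hudef]
      rw [this]
      have := S.algebraMap_mem ⟨ψ (X j'), hψmem (X j')⟩
      exact this
  have hStop : S = ⊤ := by
    rw [eq_top_iff]
    intro x _
    obtain ⟨nr, dr, hdr, hx⟩ :=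
      IsFractionRing.div_surjective (A := MvPolynomial (Fin 3) k ⧸ Ideal.span {g}) (z := x)
    obtain ⟨pn, hpn⟩ := Ideal.Quotient.mk_surjective nr
    obtain ⟨pd, hpd⟩ := Ideal.Quotient.mk_surjective dr
    have hmem : ∀ p : MvPolynomial (Fin 3) k,
        algebraMap (MvPolynomial (Fin 3) k ⧸ Ideal.span {g}) F
          (Ideal.Quotient.mk (Ideal.span {g}) p) ∈ S := by
      intro p
      have h1 : algebraMap (MvPolynomial (Fin 3) k ⧸ Ideal.span {g}) F
          (Ideal.Quotient.mk (Ideal.span {g}) p) = aeval a p := hπa p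
      rw [h1]
      have h2 : aeval a p ∈ Algebra.adjoin k (Set.range a) := by
        rw [Algebra.adjoin_range_eq_range_aeval]
        exact ⟨p, rfl⟩
      have h3 : Algebra.adjoin k (Set.range a) ≤
          (IntermediateField.restrictScalars k S).toSubalgebra := by
        apply Algebra.adjoin_le
        rintro _ ⟨j, rfl⟩
        exact hSgen j
      exact h3 h2
    rw [← hx, ← hpn, ← hpd]
    exact S.div_mem (hmem pn) (hmem pd)
  haveI hFDS : FiniteDimensional ↥E ↥S := IntermediateField.adjoin.finiteDimensional hint
  have hfr : Module.finrank ↥E F = (minpoly ↥E α).natDegree := by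
    rw [← IntermediateField.adjoin.finrank hint, ← hSdef]
    rw [hStop]
    exact (IntermediateField.topEquiv.toLinearEquiv.finrank_eq).symm
  haveI hFD : FiniteDimensional ↥E F := by
    rw [hStop] at hFDS
    exact Module.Finite.equiv IntermediateField.topEquiv.toLinearEquiv
  have hfr3 : Module.finrank ↥E F ≤ 3 := by
    rw [hfr]
    refine le_trans (Polynomial.natDegree_le_of_dvd (minpoly.dvd ↥E α haeval0) hqE0) ?_
    have hnd : qE.natDegree = q.natDegree := by
      rw [hqEdef]
      exact Polynomial.natDegree_map_eq_of_injective (fun x y hxy => hψEinj hxy) q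
    rw [hnd]
    exact hq3
  -- conclude
  have hmemset : Module.finrank ↥E F ∈ {n : ℕ | ∃ E' : IntermediateField k F,
      Nonempty (↥E' ≃ₐ[k] RatFunc2 k) ∧
      FiniteDimensional ↥E' F ∧ Module.finrank (↥E') F = n} :=
    ⟨E, hEiso, hFD, rfl⟩
  have hdef : degreeOfIrrationality k F = sInf {n : ℕ | ∃ E' : IntermediateField k F,
      Nonempty (↥E' ≃ₐ[k] RatFunc2 k) ∧
      FiniteDimensional ↥E' F ∧ Module.finrank (↥E') F = n} := rfl
  have h1 := Nat.sInf_le hmemset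
  obtain ⟨E', -, hFD', hr'⟩ := Nat.sInf_mem (Set.nonempty_of_mem hmemset)
  have h2 : 1 ≤ degreeOfIrrationality k F := by
    rw [hdef, ← hr']
    exact Module.finrank_pos
  have h3 : degreeOfIrrationality k F ≤ 3 := by
    rw [hdef]
    exact le_trans h1 hfr3
  simp only [Set.mem_insert_iff, Set.mem_singleton_iff]
  omega
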